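/- Let k, m ≥ 1, let Q̃ ∈ ℝ^{k×k} be symmetric, F ∈ ℝ^{k×m} with columns F₁,…,F_m, Λ ∈ ℝ^{k×m} with columns Λ₁,…,Λ_m, w ∈ ℝ^m, and λ ∈ ℝ^m with λ_i > 0 for all i. Suppose −Q̃ + Σ_{i=1}^m (Λ_i F_iᵀ + F_i Λ_iᵀ) − Σ_{i=1}^m λ_i^{−1} Λ_i Λ_iᵀ is positive semidefinite. Then the symmetric (k+m+1)×(k+m+1) block matrix S := [[−Q̃ + F diag(λ) Fᵀ, F diag(λ) − Λ, Λw − F diag(λ) w], [(F diag(λ) − Λ)ᵀ, diag(λ), −diag(λ) w], [(Λw − F diag(λ) w)ᵀ, −(diag(λ) w)ᵀ, wᵀ diag(λ) w]] is positive semidefinite. -/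

import Mathlib

open Matrix

noncomputable section

/-- A block diagonal matrix with PSD blocks is PSD. -/
lemma fromBlocks_zero_posSemidef {n₁ n₂ : Type*} [Fintype n₁] [Fintype n₂]
    {A : Matrix n₁ n₁ ℝ} {D : Matrix n₂ n₂ ℝ}
    (hA : A.PosSemidef) (hD : D.PosSemidef) :
    (fromBlocks A 0 0 D).PosSemidef := by
  rw [posSemidef_iff_dotProduct_mulVec]
  constructor
  · rw [Matrix.IsHermitian, fromBlocks_conjTranspose, hA.1.eq, hD.1.eq,
      conjTranspose_zero, conjTranspose_zero]
  · intro x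
    have hx : x = Sum.elim (x ∘ Sum.inl) (x ∘ Sum.inr) := (Sum.elim_comp_inl_inr x).symm
    rw [hx]
    simp only [star_trivial, fromBlocks_mulVec, sumElim_dotProduct_sumElim,
      Matrix.zero_mulVec, add_zero, zero_add]
    have h1 := hA.dotProduct_mulVec_nonneg (x ∘ Sum.inl)
    have h2 := hD.dotProduct_mulVec_nonneg (x ∘ Sum.inr)
    simp only [star_trivial] at h1 h2
    exact add_nonneg h1 h2

/-- positive semidefiniteness of the auxiliary matrix `S`. -/
theorem auxiliary_S_posSemidef {k m : ℕ} (hk : 1 ≤ k) (hm : 1 ≤ m)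
    (Qt : Matrix (Fin k) (Fin k) ℝ) (hQt : Qt.IsSymm)
    (F : Matrix (Fin k) (Fin m) ℝ) (Λ : Matrix (Fin k) (Fin m) ℝ)
    (w : Fin m → ℝ) (lam : Fin m → ℝ) (hlam : ∀ i, 0 < lam i)
    (hpsd : (-Qt
        + ∑ i, (vecMulVec (fun a => Λ a i) (fun a => F a i)
            + vecMulVec (fun a => F a i) (fun a => Λ a i))
        - ∑ i, (lam i)⁻¹ • vecMulVec (fun a => Λ a i) (fun a => Λ a i)).PosSemidef) :
    (fromBlocks
      (fromBlocks
        (-Qt + F * Matrix.diagonal lam * Fᵀ)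
        (F * Matrix.diagonal lam - Λ)
        (F * Matrix.diagonal lam - Λ)ᵀ
        (Matrix.diagonal lam))
      (Matrix.of fun i (_ : Unit) =>
        Sum.elim (fun a => Λ.mulVec w a - (F * Matrix.diagonal lam).mulVec w a)
          (fun b => -((Matrix.diagonal lam).mulVec w b)) i)
      (Matrix.of fun (_ : Unit) j =>
        Sum.elim (fun a => Λ.mulVec w a - (F * Matrix.diagonal lam).mulVec w a)
          (fun b => -((Matrix.diagonal lam).mulVec w b)) j)
      (Matrix.of fun _ _ => w ⬝ᵥ (Matrix.diagonal lam).mulVec w)).PosSemidef := by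
  classical
  have hlam0 : ∀ i, lam i ≠ 0 := fun i => (hlam i).ne'
  set D : Matrix (Fin m) (Fin m) ℝ := Matrix.diagonal lam with hD
  set Di : Matrix (Fin m) (Fin m) ℝ := Matrix.diagonal (fun i => (lam i)⁻¹) with hDi
  have hDDi : D * Di = 1 := by
    rw [hD, hDi, diagonal_mul_diagonal]
    have : (fun i => lam i * (lam i)⁻¹) = fun _ => (1 : ℝ) :=
      funext fun i => mul_inv_cancel₀ (hlam0 i)
    rw [this, diagonal_one]
  have hDiD : Di * D = 1 := by
    rw [hD, hDi, diagonal_mul_diagonal]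
    have : (fun i => (lam i)⁻¹ * lam i) = fun _ => (1 : ℝ) :=
      funext fun i => inv_mul_cancel₀ (hlam0 i)
    rw [this, diagonal_one]
  have hDt : Dᵀ = D := by rw [hD, diagonal_transpose]
  set E : Matrix (Fin m) (Fin k) ℝ := Fᵀ - Di * Λᵀ with hE
  have hEt : Eᵀ = F - Λ * Di := by
    rw [hE, transpose_sub, transpose_mul]
    simp [hDi]
  set A : Matrix (Fin k) (Fin k) ℝ := -Qt
        + ∑ i, (vecMulVec (fun a => Λ a i) (fun a => F a i)
            + vecMulVec (fun a => F a i) (fun a => Λ a i))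
        - ∑ i, (lam i)⁻¹ • vecMulVec (fun a => Λ a i) (fun a => Λ a i) with hA
  have hMF : Λ * Fᵀ = ∑ i, vecMulVec (fun a => Λ a i) (fun a => F a i) := by
    ext a b
    simp [Matrix.mul_apply, Matrix.sum_apply, vecMulVec_apply]
  have hFM : F * Λᵀ = ∑ i, vecMulVec (fun a => F a i) (fun a => Λ a i) := by
    ext a b
    simp [Matrix.mul_apply, Matrix.sum_apply, vecMulVec_apply]
  have hLL : Λ * Di * Λᵀ = ∑ i, (lam i)⁻¹ • vecMulVec (fun a => Λ a i) (fun a => Λ a i) := by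
    ext a b
    rw [Matrix.mul_apply]
    simp only [hDi, Matrix.mul_diagonal, Matrix.transpose_apply, Matrix.sum_apply,
      Matrix.smul_apply, vecMulVec_apply, smul_eq_mul]
    exact Finset.sum_congr rfl fun i _ => by ring
  have hA2 : A = -Qt + (Λ * Fᵀ + F * Λᵀ) - Λ * Di * Λᵀ := by
    rw [hA, hMF, hFM, hLL, Finset.sum_add_distrib]
  have hDpsd : D.PosSemidef := by
    rw [hD]
    exact posSemidef_diagonal_iff.mpr fun i => (hlam i).le
  set N : Matrix (Fin k ⊕ Fin m) (Fin k ⊕ Fin m) ℝ := fromBlocks A 0 0 D with hN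
  have hNpsd : N.PosSemidef := fromBlocks_zero_posSemidef hpsd hDpsd
  set cw : Matrix (Fin m) Unit ℝ := Matrix.of (fun i _ => -w i) with hcw
  set G : Matrix (Fin k ⊕ Fin m) (Fin k ⊕ Fin m) ℝ := fromBlocks 1 0 E 1 with hG
  set cc : Matrix (Fin k ⊕ Fin m) Unit ℝ := fromRows 0 cw with hcc
  set L : Matrix (Fin k ⊕ Fin m) ((Fin k ⊕ Fin m) ⊕ Unit) ℝ := fromCols G cc with hL
  -- key intermediate products
  have hDE : D * E = D * Fᵀ - Λᵀ := by
    rw [hE, Matrix.mul_sub, ← Matrix.mul_assoc, hDDi, Matrix.one_mul]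
  have hED : Eᵀ * D = F * D - Λ := by
    rw [hEt, Matrix.sub_mul, Matrix.mul_assoc, hDiD, Matrix.mul_one]
  have hNG : N * G = fromBlocks A 0 (D * E) D := by
    rw [hN, hG, fromBlocks_multiply]
    simp only [Matrix.mul_one, Matrix.mul_zero, Matrix.zero_mul, Matrix.one_mul,
      add_zero, zero_add]
  have hGt : Gᵀ = fromBlocks 1 Eᵀ 0 1 := by
    rw [hG, fromBlocks_transpose, transpose_one, transpose_one, transpose_zero]
  have h11 : Gᵀ * (N * G) = fromBlocks (A + Eᵀ * (D * E)) (Eᵀ * D) (D * E) D := by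
    rw [hGt, hNG, fromBlocks_multiply]
    simp only [Matrix.mul_one, Matrix.mul_zero, Matrix.zero_mul, Matrix.one_mul,
      add_zero, zero_add]
  have hNc : N * cc = fromRows 0 (D * cw) := by
    rw [hN, hcc, fromBlocks_mul_fromRows]
    simp only [Matrix.mul_one, Matrix.mul_zero, Matrix.zero_mul, Matrix.one_mul,
      add_zero, zero_add]
  have h12 : Gᵀ * (N * cc) = fromRows (Eᵀ * (D * cw)) (D * cw) := by
    rw [hGt, hNc, fromBlocks_mul_fromRows]
    simp only [Matrix.mul_one, Matrix.mul_zero, Matrix.zero_mul, Matrix.one_mul,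
      add_zero, zero_add]
  have hcct : ccᵀ = fromCols 0 cwᵀ := by
    rw [hcc, transpose_fromRows, transpose_zero]
  have h21 : ccᵀ * (N * G) = fromCols (cwᵀ * (D * E)) (cwᵀ * D) := by
    rw [hcct, hNG, fromCols_mul_fromBlocks]
    simp only [Matrix.mul_one, Matrix.mul_zero, Matrix.zero_mul, Matrix.one_mul,
      add_zero, zero_add]
  have h22 : ccᵀ * (N * cc) = cwᵀ * (D * cw) := by
    rw [hcct, hNc, fromCols_mul_fromRows]
    simp only [Matrix.mul_one, Matrix.mul_zero, Matrix.zero_mul, Matrix.one_mul,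
      add_zero, zero_add]
  -- block identifications
  have e1 : A + Eᵀ * (D * E) = -Qt + F * Matrix.diagonal lam * Fᵀ := by
    rw [hDE, hEt, hA2, Matrix.sub_mul, Matrix.mul_sub, Matrix.mul_sub]
    have h5 : Λ * Di * (D * Fᵀ) = Λ * Fᵀ := by
      rw [Matrix.mul_assoc, ← Matrix.mul_assoc Di D, hDiD, Matrix.one_mul]
    rw [h5, ← Matrix.mul_assoc F D, ← hD]
    abel
  have e2 : Eᵀ * D = F * Matrix.diagonal lam - Λ := by rw [hED, hD]
  have e3 : D * E = (F * Matrix.diagonal lam - Λ)ᵀ := by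
    rw [hDE, transpose_sub, transpose_mul, ← hD, hDt]
  have hFD : F * D = Matrix.of (fun i j => F i j * lam j) := by
    ext i j
    rw [hD]
    simp [Matrix.mul_diagonal]
  have hDcw : D * cw = Matrix.of (fun i (_ : Unit) => lam i * (-w i)) := by
    ext i j
    rw [hD, hcw]
    simp [Matrix.diagonal_mul]
  have hcwD : cwᵀ * D = Matrix.of (fun (_ : Unit) j => -w j * lam j) := by
    ext i j
    rw [hD, hcw]
    simp [Matrix.mul_diagonal]
  have hFDw : (F * Matrix.diagonal lam) *ᵥ w = fun i => ∑ x, F i x * lam x * w x := by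
    ext i
    simp [Matrix.mulVec, dotProduct, Matrix.mul_diagonal]
  have hDw : (Matrix.diagonal lam) *ᵥ w = fun i => lam i * w i := by
    ext i
    exact Matrix.mulVec_diagonal lam w i
  have e4 : fromRows (Eᵀ * (D * cw)) (D * cw) =
      (Matrix.of fun i (_ : Unit) =>
        Sum.elim (fun a => Λ.mulVec w a - (F * Matrix.diagonal lam).mulVec w a)
          (fun b => -((Matrix.diagonal lam).mulVec w b)) i) := by
    rw [← Matrix.mul_assoc, hED, hFD, hDcw]
    ext (i | i) j
    · rw [fromRows_apply_inl]
      simp only [Matrix.of_apply, Sum.elim_inl, hFDw]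
      simp only [Matrix.mul_apply, Matrix.sub_apply, Matrix.of_apply, hcw,
        Matrix.mulVec, dotProduct]
      rw [← Finset.sum_sub_distrib]
      exact Finset.sum_congr rfl fun x _ => by ring
    · rw [fromRows_apply_inr]
      simp [hDw]
  have e5 : fromCols (cwᵀ * (D * E)) (cwᵀ * D) =
      (Matrix.of fun (_ : Unit) j =>
        Sum.elim (fun a => Λ.mulVec w a - (F * Matrix.diagonal lam).mulVec w a)
          (fun b => -((Matrix.diagonal lam).mulVec w b)) j) := by
    have hDEc : D * E = (Matrix.of (fun i j => F i j * lam j) - Λ)ᵀ := by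
      rw [hDE, ← hFD, transpose_sub, transpose_mul, hDt]
    rw [hDEc, hcwD]
    ext i (j | j)
    · rw [fromCols_apply_inl]
      simp only [Matrix.of_apply, Sum.elim_inl, hFDw]
      simp only [Matrix.mul_apply, Matrix.sub_apply, Matrix.transpose_apply,
        Matrix.of_apply, hcw, Matrix.mulVec, dotProduct]
      rw [← Finset.sum_sub_distrib]
      exact Finset.sum_congr rfl fun x _ => by ring
    · rw [fromCols_apply_inr]
      simp [hDw, mul_comm]
  have e6 : cwᵀ * (D * cw) =
      (Matrix.of fun (_ : Unit) (_ : Unit) => w ⬝ᵥ (Matrix.diagonal lam).mulVec w) := by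
    rw [hDcw]
    ext i j
    simp only [Matrix.of_apply, hDw, dotProduct]
    simp only [Matrix.mul_apply, Matrix.transpose_apply, hcw, Matrix.of_apply]
    exact Finset.sum_congr rfl fun x _ => by ring
  -- the factorization
  have main : Lᵀ * N * L =
    (fromBlocks
      (fromBlocks
        (-Qt + F * Matrix.diagonal lam * Fᵀ)
        (F * Matrix.diagonal lam - Λ)
        (F * Matrix.diagonal lam - Λ)ᵀ
        (Matrix.diagonal lam))
      (Matrix.of fun i (_ : Unit) =>
        Sum.elim (fun a => Λ.mulVec w a - (F * Matrix.diagonal lam).mulVec w a)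
          (fun b => -((Matrix.diagonal lam).mulVec w b)) i)
      (Matrix.of fun (_ : Unit) j =>
        Sum.elim (fun a => Λ.mulVec w a - (F * Matrix.diagonal lam).mulVec w a)
          (fun b => -((Matrix.diagonal lam).mulVec w b)) j)
      (Matrix.of fun _ _ => w ⬝ᵥ (Matrix.diagonal lam).mulVec w)) := by
    rw [hL, Matrix.mul_assoc, transpose_fromCols, mul_fromCols,
      fromRows_mul_fromCols, h11, h12, h21, h22, e4, e5, e6, e1, e2, e3, hD]
  have hfinal := hNpsd.conjTranspose_mul_mul_same L
  have hLH : Lᴴ = Lᵀ := by ext i j; simp [Matrix.conjTranspose_apply]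
  rw [hLH, main] at hfinal
  exact hfinal
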